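/- Let n ≥ 0 and let a_1 ≤ a_2 ≤ … ≤ a_n be integers with 0 ≤ a_i < i for each i. Then the number of permutations σ of {1,…,n} such that σ(i) − 1 ≠ σ(j) for all i ∈ {1,…,n} and all j with 1 ≤ j ≤ a_i equals ∏_{i=1}^n (i − a_i). -/

import Mathlib

open List Finset


private lemma myInsertIdx_eq (x : ℕ) :
    ∀ (k : ℕ) (l : List ℕ), k ≤ l.length →
      l.insertIdx k x = l.take k ++ x :: l.drop k
  | 0, l, _ => by simp
  | k+1, [], h => by simp at h
  | k+1, a :: t, h => by
    simp only [List.insertIdx_succ_cons, List.take_succ_cons, List.drop_succ_cons,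
      List.cons_append, List.cons.injEq, true_and]
    exact myInsertIdx_eq x k t (by simpa using h)

private lemma myIndexOf_append (x : ℕ) :
    ∀ (u v : List ℕ), x ∉ u → (u ++ x :: v).idxOf x = u.length
  | [], v, _ => by simp
  | a :: u, v, h => by
    have hax : a ≠ x := fun he => (by simp at h; exact h.1 he.symm)
    simp only [List.cons_append, List.length_cons]
    rw [List.idxOf_cons_ne _ hax, myIndexOf_append x u v (by simp at h; exact h.2)]

private lemma myInsert_indexOf_erase (x : ℕ) :
    ∀ (l : List ℕ), x ∈ l → (l.erase x).insertIdx (l.idxOf x) x = l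
  | a :: t, h => by
    by_cases hax : a = x
    · subst hax
      simp [List.erase_cons_head]
    · rw [List.idxOf_cons_ne _ (hax : a ≠ x),
        List.erase_cons_tail (by simp [hax])]
      simp only [List.insertIdx_succ_cons, List.cons.injEq, true_and]
      refine myInsert_indexOf_erase x t ?_
      rcases List.mem_cons.1 h with h' | h'
      · exact absurd h'.symm hax
      · exact h'

private lemma myErase_insertIdx (x : ℕ) (k : ℕ) (m : List ℕ) (hx : x ∉ m) (hk : k ≤ m.length) :
    (m.insertIdx k x).erase x = m := by
  rw [myInsertIdx_eq x k m hk, List.erase_append_right _ (fun hmem => hx (List.mem_of_mem_take hmem)),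
    List.erase_cons_head, List.take_append_drop]

private lemma myGetLast?_take (m : List ℕ) (k : ℕ) (hk0 : k ≠ 0) (hk : k ≤ m.length) :
    (m.take k).getLast? = m[k-1]? := by
  rw [List.getLast?_eq_getElem?]
  have hlen : (m.take k).length = k := by simp [Nat.min_eq_left hk]
  rw [hlen, List.getElem?_take]
  simp [Nat.sub_lt (Nat.pos_of_ne_zero hk0) one_pos]

private def chainsSet (n : ℕ) (A : ℕ → ℕ) : Finset (List ℕ) :=
  ((List.range n).permutations).toFinset.filter (fun l => l.IsChain (fun x y => A y ≤ x))

private lemma mem_chainsSet {n : ℕ} {A : ℕ → ℕ} {l : List ℕ} :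
    l ∈ chainsSet n A ↔ l.Perm (List.range n) ∧ l.IsChain (fun x y => A y ≤ x) := by
  simp [chainsSet, List.mem_permutations]

private lemma range_succ_erase (n : ℕ) : (List.range (n+1)).erase n = List.range n := by
  rw [List.range_succ, List.erase_append_right _ (by simp), List.erase_cons_head, List.append_nil]

private lemma key (A : ℕ → ℕ) (hA : Monotone A) :
    ∀ n : ℕ, (∀ i, i < n → A i ≤ i) →
      (chainsSet n A).card = ∏ i ∈ Finset.range n, (i + 1 - A i) := by
  intro n
  induction n with
  | zero =>
    intro _
    have h0 : chainsSet 0 A = {[]} := by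
      ext l
      simp [mem_chainsSet]
      intro h
      simp [h]
    simp [h0]
  | succ n ih =>
    intro hle
    have hAn : A n ≤ n := hle n (Nat.lt_succ_self n)
    -- facts about members
    have hfacts : ∀ l ∈ chainsSet (n+1) A, n ∈ l ∧ (l.erase n).length = n ∧
        l = (l.erase n).take (l.idxOf n) ++ n :: (l.erase n).drop (l.idxOf n) ∧
        l.idxOf n ≤ (l.erase n).length := by
      intro l hl
      rw [mem_chainsSet] at hl
      have hmem : n ∈ l := hl.1.mem_iff.2 (by simp)
      have hlen : l.length = n + 1 := by rw [hl.1.length_eq, List.length_range]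
      have hlen' : (l.erase n).length = n := by
        rw [List.length_erase_of_mem hmem, hlen]
        omega
      have hidx : l.idxOf n ≤ (l.erase n).length := by
        have := List.idxOf_lt_length_iff.2 hmem
        omega
      refine ⟨hmem, hlen', ?_, hidx⟩
      conv_lhs => rw [← myInsert_indexOf_erase n l hmem]
      rw [myInsertIdx_eq n _ _ hidx]
    have herase_mem : ∀ l ∈ chainsSet (n+1) A, l.erase n ∈ chainsSet n A := by
      intro l hl
      obtain ⟨hmem, hlen', hsplit, hidx⟩ := hfacts l hl
      rw [mem_chainsSet] at hl ⊢
      constructor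
      · exact (hl.1.erase n).trans (by rw [range_succ_erase])
      · have hc := hl.2
        rw [hsplit, List.isChain_append] at hc
        obtain ⟨h1, h2, h3⟩ := hc
        conv_rhs => rw [← List.take_append_drop (l.idxOf n) (l.erase n)]
        rw [List.isChain_append]
        refine ⟨h1, h2.tail, ?_⟩
        intro x hx y hy
        have hxn : A n ≤ x := h3 x hx n rfl
        have hym : y ∈ l.erase n := List.mem_of_mem_drop (List.mem_of_mem_head? hy)
        have hyn : y < n := by
          have := ((hl.1.erase n).trans (by rw [range_succ_erase])).mem_iff.1 hym
          simpa using this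
        exact le_trans (hA hyn.le) hxn
    rw [Finset.card_eq_sum_card_fiberwise herase_mem]
    have hfiber : ∀ m ∈ chainsSet n A,
        ((chainsSet (n+1) A).filter (fun l => l.erase n = m)).card = n + 1 - A n := by
      intro m hm
      obtain ⟨hm1, hm2⟩ := mem_chainsSet.1 hm
      have hmlen : m.length = n := by rw [hm1.length_eq, List.length_range]
      have hmnodup : m.Nodup := hm1.nodup_iff.2 (List.nodup_range)
      have hnm : n ∉ m := fun h => by simpa using hm1.mem_iff.1 h
      have hmemm : ∀ x, x ∈ m ↔ x < n := by
        intro x; rw [hm1.mem_iff, List.mem_range]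
      set K := (Finset.range (n+1)).filter
        (fun k => ∀ x ∈ (m.take k).getLast?, A n ≤ x) with hK
      have step1 : ((chainsSet (n+1) A).filter (fun l => l.erase n = m)).card = K.card := by
        refine Finset.card_nbij' (fun l => l.idxOf n) (fun k => m.insertIdx k n) ?_ ?_ ?_ ?_
        · intro l hl
          beta_reduce
          rw [Finset.mem_coe, Finset.mem_filter] at hl
          obtain ⟨hl1, hl2⟩ := hl
          obtain ⟨hmem, hlen', hsplit, hidx⟩ := hfacts l hl1
          rw [hK, Finset.mem_coe, Finset.mem_filter, Finset.mem_range]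
          constructor
          · rw [← hl2] at *
            omega
          · have hc := (mem_chainsSet.1 hl1).2
            rw [hsplit, List.isChain_append, hl2] at hc
            exact fun x hx => hc.2.2 x hx n rfl
        · intro k hk
          beta_reduce
          rw [hK, Finset.mem_coe, Finset.mem_filter, Finset.mem_range] at hk
          obtain ⟨hk1, hk2⟩ := hk
          have hkle : k ≤ m.length := by omega
          rw [Finset.mem_coe, Finset.mem_filter]
          constructor
          · rw [mem_chainsSet]
            constructor
            · refine (List.perm_insertIdx n m hkle).trans ?_
              refine (hm1.cons n).trans ?_
              rw [List.range_succ]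
              exact (List.perm_append_singleton n (List.range n)).symm
            · rw [myInsertIdx_eq n k m hkle, List.isChain_append]
              refine ⟨hm2.take k, ?_, ?_⟩
              · rw [List.isChain_cons]
                refine ⟨?_, hm2.drop k⟩
                intro y hy
                have hym : y ∈ m := List.mem_of_mem_drop (List.mem_of_mem_head? hy)
                have := (hmemm y).1 hym
                exact le_trans (hle y (by omega)) (by omega)
              · intro x hx y hy
                simp only [List.head?_cons, Option.mem_some_iff] at hy
                rw [← hy]
                exact hk2 x hx
          · exact myErase_insertIdx n k m hnm hkle
        · intro l hl
          beta_reduce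
          rw [Finset.mem_coe, Finset.mem_filter] at hl
          obtain ⟨hmem, _, _, _⟩ := hfacts l hl.1
          rw [← hl.2]
          exact myInsert_indexOf_erase n l hmem
        · intro k hk
          beta_reduce
          rw [hK, Finset.mem_coe, Finset.mem_filter, Finset.mem_range] at hk
          have hkle : k ≤ m.length := by omega
          rw [myInsertIdx_eq n k m hkle,
            myIndexOf_append n _ _ (fun h => hnm (List.mem_of_mem_take h)),
            List.length_take, Nat.min_eq_left hkle]
      rw [step1]
      -- second bijection : K ≃ Icc (A n) n
      have step2 : K.card = (Finset.Icc (A n) n).card := by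
        refine Finset.card_nbij' (fun k => if k = 0 then n else m.getD (k-1) 0)
          (fun x => if x = n then 0 else m.idxOf x + 1) ?_ ?_ ?_ ?_
        · intro k hk
          rw [hK, Finset.mem_coe, Finset.mem_filter, Finset.mem_range] at hk
          obtain ⟨hk1, hk2⟩ := hk
          by_cases h0 : k = 0
          · simp [h0, Finset.mem_Icc, hAn]
          · have hkm : k - 1 < m.length := by omega
            have hget : (m.take k).getLast? = some (m[k-1]) := by
              rw [myGetLast?_take m k h0 (by omega), List.getElem?_eq_getElem hkm]
            have hx := hk2 _ (by rw [hget]; rfl)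
            have hmem := (hmemm _).1 (List.getElem_mem hkm)
            simp only [if_neg h0, Finset.mem_coe, Finset.mem_Icc]
            rw [List.getD_eq_getElem _ _ hkm]
            exact ⟨hx, by omega⟩
        · intro x hx
          rw [Finset.mem_coe, Finset.mem_Icc] at hx
          by_cases hxn : x = n
          · simp only [if_pos hxn]
            rw [hK, Finset.mem_coe, Finset.mem_filter, Finset.mem_range]
            exact ⟨by omega, by simp⟩
          · have hxm : x ∈ m := (hmemm x).2 (by omega)
            have hidx : m.idxOf x < m.length := List.idxOf_lt_length_iff.2 hxm
            simp only [if_neg hxn]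
            rw [hK, Finset.mem_coe, Finset.mem_filter, Finset.mem_range]
            refine ⟨by omega, ?_⟩
            intro z hz
            rw [myGetLast?_take m _ (by omega) (by omega)] at hz
            simp only [Nat.add_sub_cancel] at hz
            rw [List.getElem?_eq_getElem hidx] at hz
            simp only [Option.mem_some_iff] at hz
            rw [← hz, List.getElem_idxOf hidx]
            exact hx.1
        · intro k hk
          rw [hK, Finset.mem_coe, Finset.mem_filter, Finset.mem_range] at hk
          by_cases h0 : k = 0
          · simp [h0]
          · have hkm : k - 1 < m.length := by omega
            have hmem := (hmemm _).1 (List.getElem_mem hkm)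
            simp only [if_neg h0]
            rw [List.getD_eq_getElem _ _ hkm]
            rw [if_neg (by omega), List.Nodup.idxOf_getElem hmnodup _ hkm]
            omega
        · intro x hx
          rw [Finset.mem_coe, Finset.mem_Icc] at hx
          by_cases hxn : x = n
          · simp [hxn]
          · have hxm : x ∈ m := (hmemm x).2 (by omega)
            have hidx : m.idxOf x < m.length := List.idxOf_lt_length_iff.2 hxm
            simp only [if_neg hxn, if_neg (by omega : ¬ m.idxOf x + 1 = 0),
              Nat.add_sub_cancel]
            rw [List.getD_eq_getElem _ _ hidx, List.getElem_idxOf hidx]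
      rw [step2, Nat.card_Icc]
    rw [Finset.sum_congr rfl hfiber, Finset.sum_const, smul_eq_mul,
      ih (fun i hi => hle i (Nat.lt_succ_of_lt hi)), Finset.prod_range_succ]

set_option maxHeartbeats 2000000 in
/-- The number of permutations `σ` of `{1,…,n}` with `σ(i) - 1 ≠ σ(j)` whenever
`1 ≤ j ≤ a_i` equals `∏_{i=1}^n (i - a_i)`.  Here everything is written 0-indexed:
the element `i : Fin n` corresponds to `i+1 ∈ {1,…,n}`, so the condition `1 ≤ j ≤ a_i`
becomes `(j : ℕ) < a i`, and `σ(i) - 1 ≠ σ(j)` becomes `(σ i : ℕ) ≠ (σ j : ℕ) + 1`. -/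
theorem count_admissible_perms (n : ℕ) (a : Fin n → ℕ) (ha : Monotone a)
    (ha' : ∀ i : Fin n, a i ≤ (i : ℕ)) :
    (Finset.univ.filter (fun σ : Equiv.Perm (Fin n) =>
      ∀ i j : Fin n, (j : ℕ) < a i → (σ i : ℕ) ≠ (σ j : ℕ) + 1)).card =
    ∏ i : Fin n, ((i : ℕ) + 1 - a i) := by
  classical
  set A : ℕ → ℕ := fun x => if h : x < n then a ⟨x, h⟩ else n with hAdef
  have hAa : ∀ i : Fin n, A (i : ℕ) = a i := fun i => by simp [hAdef, i.isLt]
  have hAle : ∀ i, i < n → A i ≤ i := by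
    intro i hi
    simp only [hAdef, dif_pos hi]
    exact ha' ⟨i, hi⟩
  have hAmono : Monotone A := by
    intro x y hxy
    by_cases hx : x < n
    · by_cases hy : y < n
      · simp only [hAdef, dif_pos hx, dif_pos hy]
        exact ha (show (⟨x, hx⟩ : Fin n) ≤ ⟨y, hy⟩ from hxy)
      · simp only [hAdef, dif_pos hx, dif_neg hy]
        have := ha' ⟨x, hx⟩
        simp at this
        omega
    · have hy : ¬ y < n := by omega
      simp [hAdef, hx, hy]
  have htrans : (Finset.univ.filter (fun σ : Equiv.Perm (Fin n) =>
      ∀ i j : Fin n, (j : ℕ) < a i → (σ i : ℕ) ≠ (σ j : ℕ) + 1)).card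
      = (chainsSet n A).card := by
    refine Finset.card_bij (fun σ _ => List.ofFn (fun v => ((σ.symm v : Fin n) : ℕ)))
      ?_ ?_ ?_
    · -- membership
      intro σ hσ
      rw [Finset.mem_filter] at hσ
      have hP := hσ.2
      rw [mem_chainsSet]
      have hnodup : (List.ofFn (fun v => ((σ.symm v : Fin n) : ℕ))).Nodup := by
        rw [List.nodup_ofFn]
        exact fun u v h => σ.symm.injective (Fin.val_injective h)
      constructor
      · refine List.perm_of_nodup_nodup_toFinset_eq hnodup (List.nodup_range) ?_
        ext x
        simp only [List.mem_toFinset, List.mem_ofFn, Set.mem_range, List.mem_range]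
        constructor
        · rintro ⟨v, rfl⟩
          exact (σ.symm v).isLt
        · intro hx
          exact ⟨σ ⟨x, hx⟩, by simp⟩
      · rw [List.isChain_iff_getElem]
        intro v hv
        simp only [List.length_ofFn] at hv
        rw [List.getElem_ofFn, List.getElem_ofFn]
        have hv1 : v + 1 < n := by omega
        set i : Fin n := σ.symm ⟨v + 1, hv1⟩ with hi
        set j : Fin n := σ.symm ⟨v, by omega⟩ with hj
        show A (i : ℕ) ≤ (j : ℕ)
        rw [hAa i]
        by_contra hcon
        push_neg at hcon
        refine hP i j hcon ?_
        rw [hi, hj]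
        simp
    · -- injectivity
      intro σ hσ σ' hσ' h
      have h2 := List.ofFn_injective h
      have h3 : σ.symm = σ'.symm := by
        ext v
        exact congrArg Fin.val (Fin.val_injective (congrFun h2 v))
      calc σ = σ.symm.symm := (Equiv.symm_symm σ).symm
        _ = σ'.symm.symm := by rw [h3]
        _ = σ' := Equiv.symm_symm σ'
    · -- surjectivity
      intro l hl
      rw [mem_chainsSet] at hl
      obtain ⟨hperm, hchain⟩ := hl
      have hlen : l.length = n := by rw [hperm.length_eq, List.length_range]
      have hnodup : l.Nodup := hperm.nodup_iff.2 (List.nodup_range)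
      have hmem : ∀ x, x ∈ l ↔ x < n := fun x => by rw [hperm.mem_iff, List.mem_range]
      have hget : ∀ v : Fin n, l[(v : ℕ)]'(by omega) < n := by
        intro v
        exact (hmem _).1 (List.getElem_mem _)
      set f : Fin n → Fin n := fun v => ⟨l[(v : ℕ)]'(by omega), hget v⟩ with hf
      have hfinj : Function.Injective f := by
        intro u v huv
        have : l[(u : ℕ)]'(by omega) = l[(v : ℕ)]'(by omega) := congrArg Fin.val huv
        have := List.Nodup.getElem_inj_iff hnodup |>.1 this
        exact Fin.val_injective this
      have hfbij : Function.Bijective f := (Finite.injective_iff_bijective).1 hfinj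
      refine ⟨(Equiv.ofBijective f hfbij).symm, Finset.mem_filter.2 ⟨Finset.mem_univ _, ?_⟩, ?_⟩
      · -- the permutation condition
        intro i j hji heq
        set σ := (Equiv.ofBijective f hfbij).symm with hσ
        have hfs : ∀ w : Fin n, f (σ w) = w :=
          fun w => (Equiv.ofBijective f hfbij).apply_symm_apply w
        clear_value σ
        have hvlt : (σ j : ℕ) + 1 < n := by rw [← heq]; exact (σ i).isLt
        have hchain' := List.isChain_iff_getElem.1 hchain (σ j : ℕ) (by omega)
        have h5j : l[(σ j : ℕ)]'(by omega) = (j : ℕ) := by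
          have h5 := congrArg Fin.val (hfs j)
          simpa [hf] using h5
        have h5i : l[(σ i : ℕ)]'(by omega) = (i : ℕ) := by
          have h5 := congrArg Fin.val (hfs i)
          simpa [hf] using h5
        have hchain2 : A (l[(σ j : ℕ) + 1]'(by omega)) ≤ l[(σ j : ℕ)]'(by omega) := by
          simpa [List.get_eq_getElem] using hchain'
        have hidx : l[(σ j : ℕ) + 1]'(by omega) = l[(σ i : ℕ)]'(by omega) := by
          congr 1
          omega
        have t : A (l[(σ j : ℕ) + 1]'(by omega)) = a i :=
          ((congrArg A hidx).trans (congrArg A h5i)).trans (hAa i)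
        have hfin : a i ≤ (j : ℕ) := (t.symm.trans_le hchain2).trans_eq h5j
        omega
      · -- map equals l
        refine List.ext_getElem (by simp [hlen]) ?_
        intro i h1 h2
        rw [List.getElem_ofFn]
        simp only [Equiv.symm_symm, Equiv.ofBijective_apply, hf]
  rw [htrans, key A hAmono n hAle]
  rw [← Fin.prod_univ_eq_prod_range (fun i => i + 1 - A i) n]
  exact Finset.prod_congr rfl fun i _ => by rw [hAa i]
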